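/- Let G > 0, R > 0, γ > 0, N ≥ 1, let d = max{⌈16·N^{1−2γ}⌉, 1}, and let f(x) = G·‖x‖_∞ on ℝ^d. Start AdaGrad at x¹ = (R/√d, …, R/√d) with base stepsize h = R/N^γ, and at each step k = 1, …, N choose g^k = G·σ_k·e_{i_k}, where i_k is an index with |x^k_{i_k}| = ‖x^k‖_∞ and σ_k ∈ {−1, +1} satisfies σ_k·x^k_{i_k} = |x^k_{i_k}| (so g^k is a subgradient of f at x^k with ‖g^k‖ = ‖g^k‖₁ = G, and h_k = h/(G·√(1 + k))). Then the iterates x^{k+1} = x^k − h_k·g^k satisfy f(x^{N+1}) − min_{x∈ℝ^d} f(x) = G·‖x^{N+1}‖_∞ ≥ G·R/(2·√d). -/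

import Mathlib

open Finset

/-- Lower bound, Case 2: for AdaGrad on `f(x) = G‖x‖_∞` in dimension
`d = max{⌈16·N^{1−2γ}⌉, 1}`, started at `x¹ = (R/√d, …, R/√d)` with `h = R/N^γ`
and coordinate-wise subgradients `g^k = G·σ_k·e_{i_k}`, the last iterate satisfies
`f(x^{N+1}) − min f = G‖x^{N+1}‖_∞ ≥ GR/(2√d)`. -/
lemma sqrt_sum_bound (n : ℕ) :
    ∑ m ∈ Icc 1 n, 1 / Real.sqrt ((m : ℝ) + 1) ≤ 2 * Real.sqrt n := by
  induction n with
  | zero => simp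
  | succ n ih =>
    rw [Finset.sum_Icc_succ_top (by norm_num)]
    have ha : (0:ℝ) ≤ Real.sqrt n := Real.sqrt_nonneg _
    have hb : (0:ℝ) < Real.sqrt ((n:ℝ) + 1) := Real.sqrt_pos.mpr (by positivity)
    have ha2 : Real.sqrt n ^ 2 = n := Real.sq_sqrt (by positivity)
    have hb2 : Real.sqrt ((n:ℝ)+1) ^ 2 = (n:ℝ)+1 := Real.sq_sqrt (by positivity)
    have hs : (0:ℝ) < Real.sqrt (((n:ℕ):ℝ) + 1 + 1) := Real.sqrt_pos.mpr (by positivity)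
    have hbs : Real.sqrt ((n:ℝ)+1) ≤ Real.sqrt ((n:ℝ)+1+1) :=
      Real.sqrt_le_sqrt (by linarith)
    have key : 1 / Real.sqrt ((n:ℝ)+1) ≤ 2 * (Real.sqrt ((n:ℝ)+1) - Real.sqrt n) := by
      rw [div_le_iff₀ hb]
      nlinarith [sq_nonneg (Real.sqrt ((n:ℝ)+1) - Real.sqrt n)]
    have h2 : 1 / Real.sqrt (((n:ℕ):ℝ) + 1 + 1) ≤ 1 / Real.sqrt ((n:ℝ)+1) := by
      apply one_div_le_one_div_of_le hb hbs
    push_cast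
    push_cast at ih
    nlinarith [ih]

theorem adagrad_linf_lower_bound
    (G R γ : ℝ) (hG : 0 < G) (hR : 0 < R) (hγ : 0 < γ)
    (N d : ℕ) (hN : 1 ≤ N)
    (hd : d = max ⌈16 * (N : ℝ) ^ ((1 : ℝ) - 2 * γ)⌉₊ 1)
    (x g : ℕ → EuclideanSpace ℝ (Fin d))
    (i : ℕ → Fin d) (σ : ℕ → ℝ)
    (hx1 : ∀ j, x 1 j = R / Real.sqrt d)
    (hσ : ∀ k, 1 ≤ k → k ≤ N → σ k = 1 ∨ σ k = -1)
    (hmax : ∀ k, 1 ≤ k → k ≤ N → |x k (i k)| = ⨆ j, |x k j|)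
    (hsign : ∀ k, 1 ≤ k → k ≤ N → σ k * x k (i k) = |x k (i k)|)
    (hg : ∀ k, 1 ≤ k → k ≤ N → g k = EuclideanSpace.single (i k) (G * σ k))
    (hupd : ∀ k, 1 ≤ k → k ≤ N →
      x (k + 1) = x k -
        (R / (N : ℝ) ^ γ / Real.sqrt (G ^ 2 + ∑ i' ∈ Icc 1 k, ‖g i'‖ ^ 2)) • g k) :
    G * (⨆ j, |x (N + 1) j|) -
        (⨅ y : EuclideanSpace ℝ (Fin d), G * ⨆ j, |y j|) =
      G * (⨆ j, |x (N + 1) j|) ∧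
    G * (⨆ j, |x (N + 1) j|) ≥ G * R / (2 * Real.sqrt d) := by
  have hd1 : 1 ≤ d := by rw [hd]; exact le_max_right _ 1
  haveI : Nonempty (Fin d) := Fin.pos_iff_nonempty.mp (by omega)
  have hdR : (0:ℝ) < d := by exact_mod_cast Nat.lt_of_lt_of_le Nat.zero_lt_one hd1
  have hsd : (0:ℝ) < Real.sqrt d := Real.sqrt_pos.mpr hdR
  have hNR : (0:ℝ) < N := by exact_mod_cast hN
  have hNγ : (0:ℝ) < (N:ℝ) ^ γ := Real.rpow_pos_of_pos hNR γ
  set h : ℝ := R / (N:ℝ) ^ γ with hh_def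
  have hh : 0 < h := by positivity
  -- norms of the gradients
  have hσabs : ∀ k, 1 ≤ k → k ≤ N → |σ k| = 1 := by
    intro k h1 h2; rcases hσ k h1 h2 with h' | h' <;> rw [h'] <;> norm_num
  have hgnorm : ∀ k, 1 ≤ k → k ≤ N → ‖g k‖ = G := by
    intro k h1 h2
    rw [hg k h1 h2, EuclideanSpace.norm_single, Real.norm_eq_abs, abs_mul,
      hσabs k h1 h2, abs_of_pos hG, mul_one]
  -- the sum inside the sqrt
  have hsum : ∀ k, 1 ≤ k → k ≤ N →
      G ^ 2 + ∑ i' ∈ Icc 1 k, ‖g i'‖ ^ 2 = G ^ 2 * ((k:ℝ) + 1) := by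
    intro k h1 h2
    have : ∑ i' ∈ Icc 1 k, ‖g i'‖ ^ 2 = ∑ i' ∈ Icc 1 k, G ^ 2 := by
      apply Finset.sum_congr rfl
      intro m hm
      rw [Finset.mem_Icc] at hm
      rw [hgnorm m hm.1 (le_trans hm.2 h2)]
    rw [this, Finset.sum_const, Nat.card_Icc]
    simp only [nsmul_eq_mul]
    push_cast [Nat.add_sub_cancel]
    ring
  -- one step decreases the ℓ¹ norm by at most h/√(k+1)
  have hstep : ∀ k, 1 ≤ k → k ≤ N →
      (∑ j, |x k j|) - h / Real.sqrt ((k:ℝ) + 1) ≤ ∑ j, |x (k + 1) j| := by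
    intro k h1 h2
    have hsqk : Real.sqrt (G ^ 2 + ∑ i' ∈ Icc 1 k, ‖g i'‖ ^ 2)
        = G * Real.sqrt ((k:ℝ) + 1) := by
      rw [hsum k h1 h2, Real.sqrt_mul (sq_nonneg G), Real.sqrt_sq hG.le]
    set c : ℝ := R / (N:ℝ) ^ γ / Real.sqrt (G ^ 2 + ∑ i' ∈ Icc 1 k, ‖g i'‖ ^ 2) with hc_def
    have hk1 : (0:ℝ) < Real.sqrt ((k:ℝ) + 1) := Real.sqrt_pos.mpr (by positivity)
    have hc : c = h / (G * Real.sqrt ((k:ℝ) + 1)) := by rw [hc_def, hsqk]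
    have hcpos : 0 < c := by rw [hc]; positivity
    have hcG : c * G = h / Real.sqrt ((k:ℝ) + 1) := by
      rw [hc]; field_simp
    have happ : ∀ j, x (k+1) j = x k j - c * (if j = i k then G * σ k else 0) := by
      intro j
      rw [hupd k h1 h2]
      have : (x k - c • g k) j = x k j - c * g k j := rfl
      rw [this, hg k h1 h2, EuclideanSpace.single_apply]
    have hptwise : ∀ j, |x k j| - (if j = i k then c * G else 0) ≤ |x (k+1) j| := by
      intro j
      rw [happ j]
      have htri : |x k j| - |c * (if j = i k then G * σ k else 0)|
          ≤ |x k j - c * (if j = i k then G * σ k else 0)| :=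
        abs_sub_abs_le_abs_sub _ _
      refine le_trans ?_ htri
      gcongr ?_ - ?_ 
      · by_cases hj : j = i k
        · simp only [hj, if_true, abs_mul, abs_of_pos hcpos, abs_mul,
            hσabs k h1 h2, mul_one, abs_of_pos hG]
          exact le_rfl
        · simp [hj]
    calc (∑ j, |x k j|) - h / Real.sqrt ((k:ℝ) + 1)
        = ∑ j, (|x k j| - (if j = i k then c * G else 0)) := by
          rw [Finset.sum_sub_distrib, Finset.sum_ite_eq' Finset.univ (i k)
            (fun _ => c * G)]
          simp [hcG]
      _ ≤ ∑ j, |x (k+1) j| := Finset.sum_le_sum (fun j _ => hptwise j)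
  -- initial ℓ¹ norm
  have hS1 : ∑ j, |x 1 j| = R * Real.sqrt d := by
    have : ∀ j : Fin d, |x 1 j| = R / Real.sqrt d := by
      intro j; rw [hx1 j, abs_of_pos (by positivity)]
    rw [Finset.sum_congr rfl (fun j _ => this j), Finset.sum_const, Finset.card_univ,
      Fintype.card_fin, nsmul_eq_mul]
    field_simp
    nlinarith [Real.mul_self_sqrt hdR.le]
  -- induction: ℓ¹ norm after n steps
  have hind : ∀ n : ℕ, n ≤ N →
      R * Real.sqrt d - h * ∑ m ∈ Icc 1 n, 1 / Real.sqrt ((m:ℝ) + 1)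
        ≤ ∑ j, |x (n + 1) j| := by
    intro n
    induction n with
    | zero => intro _; simp [hS1]
    | succ n ih =>
      intro hn
      have hn' : n ≤ N := le_trans (Nat.le_succ n) hn
      have hstep' := hstep (n + 1) (Nat.succ_le_succ (Nat.zero_le n)) hn
      have ih' := ih hn'
      rw [Finset.sum_Icc_succ_top (by norm_num : 1 ≤ n + 1)]
      push_cast at hstep' ⊢
      rw [mul_add, mul_one_div]
      linarith [hstep', ih']
  have hfinal := hind N le_rfl
  -- bound the total decrease
  have hsumN : ∑ m ∈ Icc 1 N, 1 / Real.sqrt ((m:ℝ) + 1) ≤ 2 * Real.sqrt N :=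
    sqrt_sum_bound N
  -- dimension bound: √d ≥ 4√N/N^γ
  have hdlb : 16 * (N : ℝ) ^ ((1 : ℝ) - 2 * γ) ≤ (d : ℝ) := by
    rw [hd]
    push_cast [Nat.cast_max]
    exact le_trans (Nat.le_ceil _) (le_max_left _ _)
  have hsd4 : 4 * Real.sqrt N / (N:ℝ) ^ γ ≤ Real.sqrt d := by
    have h16 : Real.sqrt (16 * (N : ℝ) ^ ((1 : ℝ) - 2 * γ)) ≤ Real.sqrt d :=
      Real.sqrt_le_sqrt hdlb
    have heq : Real.sqrt (16 * (N : ℝ) ^ ((1 : ℝ) - 2 * γ))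
        = 4 * Real.sqrt N / (N:ℝ) ^ γ := by
      rw [Real.sqrt_mul (by norm_num : (0:ℝ) ≤ 16),
        show (16:ℝ) = 4^2 by norm_num, Real.sqrt_sq (by norm_num : (0:ℝ) ≤ 4),
        Real.sqrt_eq_rpow, Real.sqrt_eq_rpow, ← Real.rpow_mul hNR.le,
        show ((1:ℝ) - 2*γ) * (1/2) = 1/2 - γ by ring,
        Real.rpow_sub hNR, mul_div_assoc]
    rw [← heq]; exact h16
  -- conclude ℓ¹ lower bound
  have hL1 : R * Real.sqrt d / 2 ≤ ∑ j, |x (N + 1) j| := by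
    have h2hN : h * (2 * Real.sqrt N) ≤ R * Real.sqrt d / 2 := by
      have h4 : 4 * Real.sqrt N ≤ Real.sqrt d * (N:ℝ) ^ γ :=
        (div_le_iff₀ hNγ).mp hsd4
      rw [hh_def, div_mul_eq_mul_div, div_le_div_iff₀ hNγ (by norm_num : (0:ℝ) < 2)]
      nlinarith [mul_le_mul_of_nonneg_left h4 hR.le]
    have : h * ∑ m ∈ Icc 1 N, 1 / Real.sqrt ((m:ℝ) + 1) ≤ R * Real.sqrt d / 2 :=
      le_trans (mul_le_mul_of_nonneg_left hsumN hh.le) h2hN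
    linarith [hfinal]
  -- sup bound
  set M : ℝ := ⨆ j, |x (N + 1) j| with hM_def
  have hbdd : BddAbove (Set.range fun j => |x (N + 1) j|) :=
    Set.Finite.bddAbove (Set.finite_range _)
  have hMub : ∀ j, |x (N + 1) j| ≤ M := fun j => le_ciSup hbdd j
  have hM0 : 0 ≤ M := le_trans (abs_nonneg _) (hMub (Classical.arbitrary _))
  have hsupM : ∑ j, |x (N + 1) j| ≤ (d:ℝ) * M := by
    calc ∑ j, |x (N + 1) j| ≤ ∑ _j : Fin d, M :=
        Finset.sum_le_sum (fun j _ => hMub j)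
      _ = (d:ℝ) * M := by
        rw [Finset.sum_const, Finset.card_univ, Fintype.card_fin, nsmul_eq_mul]
  have hMlb : G * R / (2 * Real.sqrt d) ≤ G * M := by
    have hd_eq : Real.sqrt d * Real.sqrt d = (d:ℝ) := Real.mul_self_sqrt hdR.le
    have : R / (2 * Real.sqrt d) ≤ M := by
      rw [div_le_iff₀ (by positivity)]
      nlinarith [hL1, hsupM, hsd]
    calc G * R / (2 * Real.sqrt d) = G * (R / (2 * Real.sqrt d)) := by ring
      _ ≤ G * M := mul_le_mul_of_nonneg_left this hG.le
  -- the infimum is 0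
  have hinf : (⨅ y : EuclideanSpace ℝ (Fin d), G * ⨆ j, |y j|) = 0 := by
    apply le_antisymm
    · have : G * (⨆ j, |(0 : EuclideanSpace ℝ (Fin d)) j|) = 0 := by
        have : ∀ j : Fin d, |(0 : EuclideanSpace ℝ (Fin d)) j| = 0 := by
          intro j; simp
        rw [show (⨆ j, |(0 : EuclideanSpace ℝ (Fin d)) j|) = (0:ℝ) by
          simp only [this]; exact ciSup_const]
        ring
      calc (⨅ y : EuclideanSpace ℝ (Fin d), G * ⨆ j, |y j|)
          ≤ G * ⨆ j, |(0 : EuclideanSpace ℝ (Fin d)) j| := by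
            apply ciInf_le
            refine ⟨0, ?_⟩
            rintro _ ⟨y, rfl⟩
            have hb' : BddAbove (Set.range fun j => |y j|) :=
              Set.Finite.bddAbove (Set.finite_range _)
            have : (0:ℝ) ≤ ⨆ j, |y j| :=
              le_trans (abs_nonneg _) (le_ciSup hb' (Classical.arbitrary _))
            positivity
        _ = 0 := this
    · apply le_ciInf
      intro y
      have hb' : BddAbove (Set.range fun j => |y j|) :=
        Set.Finite.bddAbove (Set.finite_range _)
      have : (0:ℝ) ≤ ⨆ j, |y j| :=
        le_trans (abs_nonneg _) (le_ciSup hb' (Classical.arbitrary _))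
      positivity
  exact ⟨by rw [hinf, sub_zero], hMlb⟩
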